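/- Let G be a finite connected weighted graph on d vertices with degree matrix D ≻ 0, adjacency W, and Laplacian L = I - D^{-1/2}WD^{-1/2} having spectral gap τ = λ'_2 > 0 (second smallest eigenvalue). Let g ∈ ℂ^d with |g_i| = 1 for all i. Then there exists θ ∈ [0, 2π] such that τ ∑_{i} deg(i) |g_i - e^{iθ}|^2 ≤ 2 ∑_{(i,j) ∈ E} |g_i - g_j|^2. -/

import Mathlib

open Real Complex

theorem stmt_11 (d : ℕ) (hd : 0 < d) (w : Fin d → Fin d → ℝ)
    (hsymm : ∀ i j, w i j = w j i) (hnonneg : ∀ i j, 0 ≤ w i j)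
    (deg : Fin d → ℝ) (hdeg : ∀ i, deg i = ∑ j, w i j) (hdegpos : ∀ i, 0 < deg i)
    (τ : ℝ) (hτ : 0 < τ)
    (hgap : ∀ y : Fin d → ℂ, (∑ i, (deg i : ℂ) * y i) = 0 →
      τ * ∑ i, deg i * ‖y i‖^2 ≤ (1/2) * ∑ i, ∑ j, w i j * ‖y i - y j‖^2)
    (g : Fin d → ℂ) (hg : ∀ i, ‖g i‖ = 1) :
    ∃ θ ∈ Set.Icc (0:ℝ) (2 * π),
      τ * ∑ i, deg i * ‖g i - Complex.exp (θ * Complex.I)‖^2 ≤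
        2 * ∑ i, ∑ j, w i j * ‖g i - g j‖^2 := by
  classical
  obtain ⟨vol, hvol⟩ : ∃ v : ℝ, v = ∑ i, deg i := ⟨_, rfl⟩
  have hvolpos : 0 < vol := by
    rw [hvol]
    exact Finset.sum_pos (fun i _ => hdegpos i) ⟨⟨0, hd⟩, Finset.mem_univ _⟩
  obtain ⟨α, hα⟩ : ∃ a : ℂ, a = ∑ i, (deg i : ℂ) * g i := ⟨_, rfl⟩
  have hαle : ‖α‖ ≤ vol := by
    rw [hα, hvol]
    calc ‖∑ i, (deg i : ℂ) * g i‖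
        ≤ ∑ i, ‖(deg i : ℂ) * g i‖ := by
          simpa using norm_sum_le Finset.univ (fun i => (deg i : ℂ) * g i)
    _ = ∑ i, deg i := by
          refine Finset.sum_congr rfl (fun i _ => ?_)
          rw [norm_mul, hg i, mul_one, Complex.norm_real, Real.norm_eq_abs, abs_of_pos (hdegpos i)]
  have hvolC : (vol : ℂ) ≠ 0 := by exact_mod_cast hvolpos.ne'
  obtain ⟨β, hβ⟩ : ∃ b : ℂ, b = α / vol := ⟨_, rfl⟩
  have hαβ : α = (vol : ℂ) * β := by rw [hβ]; field_simp
  have hβle : ‖β‖ ≤ 1 := by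
    rw [hβ, norm_div, Complex.norm_real, Real.norm_eq_abs, abs_of_pos hvolpos]
    exact div_le_one_of_le₀ hαle hvolpos.le
  -- expansion lemma
  have key : ∀ z : ℂ, ∑ i, deg i * ‖g i - z‖^2
      = vol * (1 + Complex.normSq z) - 2 * (α * (starRingEnd ℂ) z).re := by
    intro z
    have h0 : ∀ i : Fin d, deg i * ‖g i - z‖^2
        = deg i * (1 + Complex.normSq z)
          - 2 * (((deg i : ℂ) * (g i * (starRingEnd ℂ) z)).re) := by
      intro i
      have h1 : ‖g i - z‖^2 = Complex.normSq (g i - z) := by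
        rw [← Complex.sq_norm]
      have h2 : Complex.normSq (g i) = 1 := by
        rw [← Complex.sq_norm, hg i]; norm_num
      rw [h1, Complex.normSq_sub, h2, Complex.re_ofReal_mul]
      ring
    rw [Finset.sum_congr rfl (fun i _ => h0 i), Finset.sum_sub_distrib,
        ← Finset.sum_mul, ← Finset.mul_sum, ← Complex.re_sum]
    have h3 : (∑ i, (deg i : ℂ) * (g i * (starRingEnd ℂ) z))
        = α * (starRingEnd ℂ) z := by
      rw [hα, Finset.sum_mul]
      exact Finset.sum_congr rfl (fun i _ => by ring)
    rw [h3, ← hvol]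
  -- the chosen unit complex
  obtain ⟨c, hc⟩ : ∃ c : ℂ,
      c = if β = 0 then 1 else ((‖β‖ : ℝ) : ℂ)⁻¹ * β := ⟨_, rfl⟩
  have hcabs : ‖c‖ = 1 := by
    rw [hc]
    split_ifs with h
    · simp
    · rw [norm_mul, norm_inv, Complex.norm_real,
        norm_norm]
      exact inv_mul_cancel₀ (norm_pos_iff.mpr h).ne'
  have hre : (α * (starRingEnd ℂ) c).re = vol * ‖β‖ := by
    rw [hc]
    split_ifs with h
    · have hz : α = 0 := by rw [hαβ, h, mul_zero]
      simp [hz, h]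
    · have hb : ((‖β‖ : ℝ) : ℂ) ≠ 0 := by
        simpa using (norm_pos_iff.mpr h).ne'
      rw [map_mul, map_inv₀, Complex.conj_ofReal, hαβ]
      have h4 : (vol : ℂ) * β * (((‖β‖ : ℝ) : ℂ)⁻¹ * (starRingEnd ℂ) β)
          = ((vol * ‖β‖ : ℝ) : ℂ) := by
        rw [show (vol : ℂ) * β * (((‖β‖ : ℝ) : ℂ)⁻¹ * (starRingEnd ℂ) β)
            = (vol : ℂ) * (β * (starRingEnd ℂ) β) * (((‖β‖ : ℝ) : ℂ))⁻¹
            from by ring, Complex.mul_conj]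
        have habs : ((Complex.normSq β : ℝ) : ℂ)
            = ((‖β‖ : ℝ) : ℂ) * ((‖β‖ : ℝ) : ℂ) := by
          norm_cast
          rw [← Complex.sq_norm]; ring
        rw [habs]
        push_cast
        rw [show (vol : ℂ) * (((‖β‖ : ℝ) : ℂ) * ((‖β‖ : ℝ) : ℂ))
            * (((‖β‖ : ℝ) : ℂ))⁻¹
            = (vol : ℂ) * ((‖β‖ : ℝ) : ℂ)
              * ((((‖β‖ : ℝ) : ℂ)) * (((‖β‖ : ℝ) : ℂ))⁻¹)
            from by ring, mul_inv_cancel₀ hb, mul_one]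
      rw [h4, Complex.ofReal_re]
  -- apply the gap hypothesis to y = g - β
  have hmean : (∑ i, (deg i : ℂ) * (g i - β)) = 0 := by
    have h5 : ∀ i : Fin d, (deg i : ℂ) * (g i - β)
        = (deg i : ℂ) * g i - (deg i : ℂ) * β := fun i => by ring
    rw [Finset.sum_congr rfl (fun i _ => h5 i), Finset.sum_sub_distrib,
        ← Finset.sum_mul, ← hα]
    have h6 : (∑ i, ((deg i : ℝ) : ℂ)) = (vol : ℂ) := by
      rw [hvol]; push_cast; ring
    rw [h6, ← hαβ, sub_self]
  have hgapβ := hgap (fun i => g i - β) hmean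
  have hkeyβ : ∑ i, deg i * ‖g i - β‖^2 = vol * (1 - Complex.normSq β) := by
    rw [key β]
    have h7 : (α * (starRingEnd ℂ) β).re = vol * Complex.normSq β := by
      rw [hαβ, mul_assoc, Complex.mul_conj, Complex.re_ofReal_mul,
        Complex.ofReal_re]
    rw [h7]; ring
  have hedge : ∑ i, ∑ j, w i j * ‖(g i - β) - (g j - β)‖^2
      = ∑ i, ∑ j, w i j * ‖g i - g j‖^2 := by
    refine Finset.sum_congr rfl (fun i _ => Finset.sum_congr rfl (fun j _ => ?_))
    have : (g i - β) - (g j - β) = g i - g j := by ring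
    rw [this]
  have hgap2 : τ * (vol * (1 - Complex.normSq β))
      ≤ (1/2) * ∑ i, ∑ j, w i j * ‖g i - g j‖^2 := by
    rw [← hkeyβ, ← hedge]
    exact hgapβ
  have hSnn : 0 ≤ ∑ i, ∑ j, w i j * ‖g i - g j‖^2 :=
    Finset.sum_nonneg fun i _ => Finset.sum_nonneg fun j _ =>
      mul_nonneg (hnonneg i j) (sq_nonneg _)
  -- choose θ
  refine ⟨if 0 ≤ c.arg then c.arg else c.arg + 2 * π, ?_, ?_⟩
  · split_ifs with h
    · exact ⟨h, le_trans (Complex.arg_le_pi c) (by linarith [pi_pos])⟩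
    · exact ⟨by linarith [Complex.neg_pi_lt_arg c, pi_pos],
        by linarith [Complex.arg_le_pi c, pi_pos]⟩
  · have hexp : Complex.exp
        (((if 0 ≤ c.arg then c.arg else c.arg + 2 * π : ℝ)) * Complex.I) = c := by
      have hbase : Complex.exp ((c.arg : ℝ) * Complex.I) = c := by
        have := Complex.norm_mul_exp_arg_mul_I c
        rwa [hcabs, Complex.ofReal_one, one_mul] at this
      split_ifs with h
      · exact hbase
      · push_cast
        rw [add_mul, Complex.exp_add, hbase,
          show ((2:ℂ) * (π:ℂ)) * Complex.I = 2 * (π:ℂ) * Complex.I from by ring,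
          Complex.exp_two_pi_mul_I, mul_one]
    rw [hexp, key c]
    have hcn : Complex.normSq c = 1 := by
      rw [← Complex.sq_norm, hcabs]; norm_num
    rw [hcn, hre]
    have h1 : Complex.normSq β ≤ ‖β‖ := by
      rw [← Complex.sq_norm, sq]
      exact mul_le_of_le_one_left (norm_nonneg β) hβle
    have h2 : 0 ≤ τ * vol * (‖β‖ - Complex.normSq β) :=
      mul_nonneg (mul_nonneg hτ.le hvolpos.le) (sub_nonneg.2 h1)
    nlinarith [h2, hgap2, hSnn]
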